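/- Let ψ_w(x) ∈ ℝ^D be the random Fourier feature map ψ(x) = √(2/D)·(sin(w₁ᵀx), cos(w₁ᵀx), …, sin(w_{D/2}ᵀx), cos(w_{D/2}ᵀx)) with w_i drawn i.i.d. from the Fourier transform density k* of a normalized shift-invariant positive definite kernel k (k(0) = 1). Then for any x, y ∈ ℝ^d, the mean squared error satisfies E_w[(ψ(x)ᵀψ(y) − k(x − y))²] = (1/D)·(1 + k(2(x − y)) − 2·k(x − y)²). -/

import Mathlib

open MeasureTheory

/-- The random Fourier feature map with `M` frequencies (`D = 2M` feature dimensions):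
`ψ(x) = √(2/D)·(sin(w₁ᵀx), cos(w₁ᵀx), …, sin(w_Mᵀx), cos(w_Mᵀx))`. -/
noncomputable def rff {d : ℕ} (M : ℕ) (w : Fin M → EuclideanSpace ℝ (Fin d))
    (x : EuclideanSpace ℝ (Fin d)) : Fin M × Bool → ℝ :=
  fun p => Real.sqrt (2 / (2 * M)) *
    (if p.2 then Real.cos (inner ℝ (w p.1) x : ℝ) else Real.sin (inner ℝ (w p.1) x : ℝ))

private lemma integrable_of_bdd {Ω : Type*} [MeasurableSpace Ω] (P : Measure Ω)
    [IsProbabilityMeasure P] {f : Ω → ℝ} (hf : Measurable f) (C : ℝ)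
    (h : ∀ ω, |f ω| ≤ C) : Integrable f P := by
  refine Integrable.mono' (integrable_const C) hf.aestronglyMeasurable ?_
  filter_upwards with ω using by simpa using h ω

theorem stmt_12 {Ω : Type*} [MeasurableSpace Ω] (P : Measure Ω) [IsProbabilityMeasure P]
    (d M : ℕ) (hM : 0 < M)
    (w : Fin M → Ω → EuclideanSpace ℝ (Fin d)) (hw : ∀ i, Measurable (w i))
    (hindep : ProbabilityTheory.iIndepFun w P)
    (μ : Measure (EuclideanSpace ℝ (Fin d))) [IsProbabilityMeasure μ]
    (hdist : ∀ i, Measure.map (w i) P = μ)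
    (k : EuclideanSpace ℝ (Fin d) → ℝ)
    (hk : ∀ δ, k δ = ∫ v, Real.cos (inner ℝ v δ : ℝ) ∂μ)
    (hk0 : k 0 = 1)
    (x y : EuclideanSpace ℝ (Fin d)) :
    (∫ ω, ((∑ p : Fin M × Bool,
        rff M (fun i => w i ω) x p * rff M (fun i => w i ω) y p) - k (x - y)) ^ 2 ∂P) =
      (1 / (2 * M)) * (1 + k ((2 : ℝ) • (x - y)) - 2 * (k (x - y)) ^ 2) := by
  classical
  set δ : EuclideanSpace ℝ (Fin d) := x - y with hδ
  set κ : ℝ := k δ with hκ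
  have hMne : (M : ℝ) ≠ 0 := Nat.cast_ne_zero.mpr hM.ne'
  set g : EuclideanSpace ℝ (Fin d) → ℝ := fun v => Real.cos (inner ℝ v δ : ℝ) - κ with hg
  have hginner : Continuous fun v : EuclideanSpace ℝ (Fin d) => (inner ℝ v δ : ℝ) :=
    continuous_id.inner continuous_const
  have hgc : Continuous g := (Real.continuous_cos.comp hginner).sub continuous_const
  set Y : Fin M → Ω → ℝ := fun i ω => g (w i ω) with hY
  have hYm : ∀ i, Measurable (Y i) := fun i => hgc.measurable.comp (hw i)
  have hYbd : ∀ i ω, |Y i ω| ≤ 1 + |κ| := by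
    intro i ω
    calc |Y i ω| ≤ |Real.cos (inner ℝ (w i ω) δ : ℝ)| + |κ| := abs_sub _ _
    _ ≤ 1 + |κ| := by have := Real.abs_cos_le_one (inner ℝ (w i ω) δ : ℝ); linarith
  have hYint : ∀ i, Integrable (Y i) P := fun i => integrable_of_bdd P (hYm i) _ (hYbd i)
  have hmap : ∀ i (f : EuclideanSpace ℝ (Fin d) → ℝ), Continuous f →
      ∫ ω, f (w i ω) ∂P = ∫ v, f v ∂μ := by
    intro i f hf
    rw [← hdist i, integral_map (hw i).aemeasurable hf.measurable.aestronglyMeasurable]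
  have hcosμ : Integrable (fun v : EuclideanSpace ℝ (Fin d) =>
      Real.cos (inner ℝ v δ : ℝ)) μ :=
    integrable_of_bdd μ (Real.continuous_cos.comp hginner).measurable 1
      (fun v => Real.abs_cos_le_one _)
  have hcos2μ : Integrable (fun v : EuclideanSpace ℝ (Fin d) =>
      Real.cos (inner ℝ v ((2:ℝ) • δ) : ℝ)) μ :=
    integrable_of_bdd μ (Real.continuous_cos.comp
      (continuous_id.inner continuous_const)).measurable 1 (fun v => Real.abs_cos_le_one _)
  -- expectation of Y i is zero
  have hEY : ∀ i, ∫ ω, Y i ω ∂P = 0 := by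
    intro i
    rw [show (∫ ω, Y i ω ∂P) = ∫ v, g v ∂μ from hmap i g hgc, hg]
    simp only
    rw [integral_sub hcosμ (integrable_const κ), integral_const, ← hk δ]
    simp [hκ]
  -- second moment
  have hEY2 : ∀ i, ∫ ω, Y i ω * Y i ω ∂P = 1 / 2 + k ((2 : ℝ) • δ) / 2 - κ ^ 2 := by
    intro i
    rw [show (∫ ω, Y i ω * Y i ω ∂P) = ∫ v, g v * g v ∂μ from
      hmap i (fun v => g v * g v) (hgc.mul hgc)]
    have hcos2 : ∀ v : EuclideanSpace ℝ (Fin d),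
        g v * g v = (1 / 2 + κ ^ 2) +
          (Real.cos (inner ℝ v ((2:ℝ) • δ) : ℝ) / 2 - 2 * κ * Real.cos (inner ℝ v δ : ℝ)) := by
      intro v
      have h2 : (inner ℝ v ((2:ℝ) • δ) : ℝ) = 2 * (inner ℝ v δ : ℝ) := by
        rw [real_inner_smul_right]
      rw [h2]
      have h3 : Real.cos (inner ℝ v δ : ℝ) ^ 2 = 1 / 2 + Real.cos (2 * (inner ℝ v δ : ℝ)) / 2 :=
        Real.cos_sq _
      simp only [hg]; nlinarith [h3]
    simp_rw [hcos2]
    have hI1 : Integrable (fun v : EuclideanSpace ℝ (Fin d) =>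
        Real.cos (inner ℝ v ((2:ℝ) • δ) : ℝ) / 2) μ := hcos2μ.div_const 2
    have hI2 : Integrable (fun v : EuclideanSpace ℝ (Fin d) =>
        2 * κ * Real.cos (inner ℝ v δ : ℝ)) μ := hcosμ.const_mul _
    have hI3 : Integrable (fun v : EuclideanSpace ℝ (Fin d) =>
        Real.cos (inner ℝ v ((2:ℝ) • δ) : ℝ) / 2 - 2 * κ * Real.cos (inner ℝ v δ : ℝ)) μ :=
      hI1.sub hI2
    rw [integral_add (integrable_const _) hI3, integral_const, integral_sub hI1 hI2,
      integral_div, integral_const_mul, ← hk, ← hk]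
    simp [hκ]
    ring
  -- cross terms vanish
  have hcross : ∀ i j, i ≠ j → ∫ ω, Y i ω * Y j ω ∂P = 0 := by
    intro i j hij
    have hind : ProbabilityTheory.IndepFun (Y i) (Y j) P :=
      (hindep.indepFun hij).comp hgc.measurable hgc.measurable
    have h := hind.integral_mul_eq_mul_integral (hYint i).1 (hYint j).1
    simp only [Pi.mul_apply] at h
    calc (∫ ω, Y i ω * Y j ω ∂P) = (∫ ω, Y i ω ∂P) * ∫ ω, Y j ω ∂P := h
    _ = 0 := by rw [hEY i, hEY j]; ring
  -- products are integrable
  have hYYint : ∀ i j, Integrable (fun ω => Y i ω * Y j ω) P := by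
    intro i j
    refine integrable_of_bdd P ((hYm i).mul (hYm j)) ((1 + |κ|) ^ 2) ?_
    intro ω
    rw [abs_mul]
    have h1 := hYbd i ω; have h2 := hYbd j ω
    have := abs_nonneg (Y i ω); have := abs_nonneg (Y j ω)
    nlinarith
  -- reduce the RFF inner product
  have hsum : ∀ ω, ((∑ p : Fin M × Bool,
      rff M (fun i => w i ω) x p * rff M (fun i => w i ω) y p) - κ)
      = (M : ℝ)⁻¹ * ∑ i, Y i ω := by
    intro ω
    have hc : Real.sqrt (2 / (2 * M)) * Real.sqrt (2 / (2 * M)) = (M : ℝ)⁻¹ := by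
      rw [Real.mul_self_sqrt (by positivity)]
      field_simp
    rw [Fintype.sum_prod_type]
    have hterm : ∀ i : Fin M, (∑ b : Bool,
        rff M (fun i => w i ω) x (i, b) * rff M (fun i => w i ω) y (i, b))
        = (M : ℝ)⁻¹ * Real.cos (inner ℝ (w i ω) δ : ℝ) := by
      intro i
      have hinner : (inner ℝ (w i ω) δ : ℝ) = (inner ℝ (w i ω) x : ℝ) - (inner ℝ (w i ω) y : ℝ) := by
        rw [hδ, inner_sub_right]
      rw [Fintype.sum_bool]
      simp only [rff, if_true, Bool.false_eq_true, if_false]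
      rw [hinner, Real.cos_sub, ← hc]
      ring
    rw [Finset.sum_congr rfl (fun i _ => hterm i), ← Finset.mul_sum]
    simp only [hY, hg]
    rw [Finset.sum_sub_distrib, Finset.sum_const, Finset.card_univ, Fintype.card_fin,
      nsmul_eq_mul, mul_sub]
    field_simp
  -- put everything together
  calc (∫ ω, ((∑ p : Fin M × Bool,
        rff M (fun i => w i ω) x p * rff M (fun i => w i ω) y p) - κ) ^ 2 ∂P)
      = ∫ ω, ((M : ℝ)⁻¹) ^ 2 * ∑ i, ∑ j, Y i ω * Y j ω ∂P := by
        refine integral_congr_ae (Filter.Eventually.of_forall fun ω => ?_)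
        dsimp only
        rw [hsum ω, mul_pow, pow_two (∑ i, Y i ω), Finset.sum_mul_sum]
    _ = ((M : ℝ)⁻¹) ^ 2 * ∑ i, ∑ j, ∫ ω, Y i ω * Y j ω ∂P := by
        rw [integral_const_mul,
          integral_finset_sum _ (fun i _ => integrable_finset_sum _ (fun j _ => hYYint i j))]
        exact congrArg _ (Finset.sum_congr rfl fun i _ =>
          integral_finset_sum _ fun j _ => hYYint i j)
    _ = ((M : ℝ)⁻¹) ^ 2 * ∑ _i : Fin M, (1 / 2 + k ((2:ℝ) • δ) / 2 - κ ^ 2) := by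
        refine congrArg _ (Finset.sum_congr rfl fun i _ => ?_)
        rw [Finset.sum_eq_single i (fun j _ hji => hcross i j (Ne.symm hji)) (by simp)]
        exact hEY2 i
    _ = (1 / (2 * M)) * (1 + k ((2 : ℝ) • δ) - 2 * κ ^ 2) := by
        rw [Finset.sum_const, Finset.card_univ, Fintype.card_fin, nsmul_eq_mul]
        field_simp
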